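/- Let V be a real normed vector space and Ω ⊆ V an open convex subset with Ω ≠ V. Then the function x ↦ dist(x, V \ Ω) is concave on Ω; that is, for all x₁, x₂ ∈ Ω and a₁, a₂ > 0 with a₁ + a₂ = 1, one has dist(a₁x₁ + a₂x₂, V \ Ω) ≥ a₁·dist(x₁, V \ Ω) + a₂·dist(x₂, V \ Ω). -/

import Mathlib

/-- concavity of the distance to the complement of a proper open
convex subset of a real normed vector space. -/
theorem dist_to_compl_concave
    {V : Type*} [NormedAddCommGroup V] [NormedSpace ℝ V]
    (Ω : Set V) (hopen : IsOpen Ω) (hconv : Convex ℝ Ω) (hproper : Ω ≠ Set.univ)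
    (x₁ x₂ : V) (hx₁ : x₁ ∈ Ω) (hx₂ : x₂ ∈ Ω)
    (a₁ a₂ : ℝ) (ha₁ : 0 < a₁) (ha₂ : 0 < a₂) (hsum : a₁ + a₂ = 1) :
    a₁ * Metric.infDist x₁ Ωᶜ + a₂ * Metric.infDist x₂ Ωᶜ ≤
      Metric.infDist (a₁ • x₁ + a₂ • x₂) Ωᶜ := by
  have hne : Ωᶜ.Nonempty := by rwa [Set.nonempty_compl]
  set d₁ := Metric.infDist x₁ Ωᶜ with hd₁def
  set d₂ := Metric.infDist x₂ Ωᶜ with hd₂def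
  have hd₁ : 0 ≤ d₁ := Metric.infDist_nonneg
  have hd₂ : 0 ≤ d₂ := Metric.infDist_nonneg
  have hball : ∀ x : V, Metric.ball x (Metric.infDist x Ωᶜ) ⊆ Ω := by
    intro x y hy
    by_contra hyΩ
    have h1 : Metric.infDist x Ωᶜ ≤ dist x y :=
      Metric.infDist_le_dist_of_mem (Set.mem_compl hyΩ)
    rw [Metric.mem_ball, dist_comm] at hy
    linarith
  rw [← not_lt, Metric.infDist_lt_iff hne]
  rintro ⟨c, hc, hlt⟩
  set D := a₁ * d₁ + a₂ * d₂ with hD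
  set z := a₁ • x₁ + a₂ • x₂ with hz
  have hDpos : 0 < D := lt_of_le_of_lt dist_nonneg hlt
  set v := c - z with hv
  have hvn : ‖v‖ < D := by
    rw [hv, ← dist_eq_norm, dist_comm]; exact hlt
  have mem : ∀ (x : V) (d : ℝ), 0 ≤ d → d = Metric.infDist x Ωᶜ → x ∈ Ω →
      x + (d / D) • v ∈ Ω := by
    intro x d hd hdd hx
    rcases eq_or_lt_of_le hd with h | h
    · simpa [← h] using hx
    · apply hball x
      rw [Metric.mem_ball, dist_eq_norm, ← hdd]
      have : ‖x + (d / D) • v - x‖ = (d / D) * ‖v‖ := by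
        rw [add_sub_cancel_left, norm_smul, Real.norm_eq_abs,
          abs_of_pos (div_pos h hDpos)]
      rw [this]
      calc (d / D) * ‖v‖ < (d / D) * D := by
            exact mul_lt_mul_of_pos_left hvn (div_pos h hDpos)
        _ = d := by field_simp
  have h₁ : x₁ + (d₁ / D) • v ∈ Ω := mem x₁ d₁ hd₁ hd₁def hx₁
  have h₂ : x₂ + (d₂ / D) • v ∈ Ω := mem x₂ d₂ hd₂ hd₂def hx₂
  have hcomb : a₁ • (x₁ + (d₁ / D) • v) + a₂ • (x₂ + (d₂ / D) • v) = c := by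
    have : c = z + v := by rw [hv]; abel
    rw [this, hz]
    have hDne : D ≠ 0 := ne_of_gt hDpos
    rw [smul_add, smul_add, smul_smul, smul_smul]
    have : a₁ * (d₁ / D) + a₂ * (d₂ / D) = 1 := by
      field_simp [hD]
      exact hD.symm
    rw [show a₁ • x₁ + (a₁ * (d₁ / D)) • v + (a₂ • x₂ + (a₂ * (d₂ / D)) • v)
        = a₁ • x₁ + a₂ • x₂ + ((a₁ * (d₁ / D) + a₂ * (d₂ / D)) • v) by
      rw [add_smul]; abel]
    rw [this, one_smul]
  have : c ∈ Ω := by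
    rw [← hcomb]
    exact hconv h₁ h₂ ha₁.le ha₂.le hsum
  exact hc this
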